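/- The marginal product MP satisfies: MP(n) > MP(n−1) for every integer n ≥ 2 (i.e., MP is strictly increasing), and MP(n) > g(n) for every integer n ≥ 2. -/

import Mathlib

open Filter Finset

/-- The benefit function `f` with its first and second derivatives, together with
the maximizer map `α ↦ x̂_α` (the unique `x ≥ 0` with `f'(x̂_α) = α` for `α ∈ (0, f'(0)]`). -/
structure BenefitFun where
  f : ℝ → ℝ
  f' : ℝ → ℝ
  f'' : ℝ → ℝ
  xhat : ℝ → ℝ
  f_zero : f 0 = 0
  f_nonneg : ∀ x : ℝ, 0 ≤ x → 0 ≤ f x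
  hasDeriv : ∀ x ∈ Set.Ici (0:ℝ), HasDerivWithinAt f (f' x) (Set.Ici 0) x
  hasDeriv' : ∀ x ∈ Set.Ici (0:ℝ), HasDerivWithinAt f' (f'' x) (Set.Ici 0) x
  cont_f'' : ContinuousOn f'' (Set.Ici 0)
  f'_pos : ∀ x : ℝ, 0 < x → 0 < f' x
  f''_neg : ∀ x : ℝ, 0 < x → f'' x < 0
  f'_tendsto : Filter.Tendsto f' Filter.atTop (nhds 0)
  xhat_nonneg : ∀ α : ℝ, 0 < α → α ≤ f' 0 → 0 ≤ xhat α
  xhat_spec : ∀ α : ℝ, 0 < α → α ≤ f' 0 → f' (xhat α) = α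
  xhat_unique : ∀ α : ℝ, 0 < α → α ≤ f' 0 → ∀ x : ℝ, 0 ≤ x → f' x = α → x = xhat α
  xhat_max : ∀ α : ℝ, 0 < α → α ≤ f' 0 → ∀ x : ℝ, 0 ≤ x → f x - α * x ≤ f (xhat α) - α * xhat α

/-- `f*(α) = f(x̂_α) − α·x̂_α = sup_{x ≥ 0} (f(x) − α x)`. -/
noncomputable def BenefitFun.fstar (B : BenefitFun) (α : ℝ) : ℝ :=
  B.f (B.xhat α) - α * B.xhat α

/-- `β̃(n) = (1/n)·κ + ((n−1)/n)·(δ+σ)`. -/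
noncomputable def btilde (κ δ σ : ℝ) (n : ℕ) : ℝ :=
  (1 / (n:ℝ)) * κ + (((n:ℝ) - 1) / (n:ℝ)) * (δ + σ)

/-- `G(n) = n·f*(β̃(n))` (with `G(0) = 0`). -/
noncomputable def Gfun (B : BenefitFun) (κ δ σ : ℝ) (n : ℕ) : ℝ :=
  (n:ℝ) * B.fstar (btilde κ δ σ n)

/-- Marginal product: `MP(n) = G(n) − G(n−1)`, so `MP(1) = G(1)`. -/
noncomputable def MP (B : BenefitFun) (κ δ σ : ℝ) (n : ℕ) : ℝ :=
  Gfun B κ δ σ n - Gfun B κ δ σ (n - 1)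

section AuxLemmas
variable (B : BenefitFun)

lemma cont_f : ContinuousOn B.f (Set.Ici 0) :=
  fun x hx => (B.hasDeriv x hx).continuousWithinAt

lemma cont_f'_aux : ContinuousOn B.f' (Set.Ici 0) :=
  fun x hx => (B.hasDeriv' x hx).continuousWithinAt

lemma deriv_eq_f (x : ℝ) (hx : 0 < x) : deriv B.f x = B.f' x :=
  ((B.hasDeriv x hx.le).hasDerivAt (Ici_mem_nhds hx)).deriv

lemma strictAnti_f' : StrictAntiOn B.f' (Set.Ici 0) := by
  apply strictAntiOn_of_deriv_neg (convex_Ici 0) (cont_f'_aux B)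
  intro x hx
  rw [interior_Ici] at hx
  rw [((B.hasDeriv' x (Set.mem_Ici.mpr (le_of_lt (Set.mem_Ioi.mp hx)))).hasDerivAt (Ici_mem_nhds hx)).deriv]
  exact B.f''_neg x hx

lemma strictConcave : StrictConcaveOn ℝ (Set.Ici 0) B.f := by
  apply StrictAntiOn.strictConcaveOn_of_deriv (convex_Ici 0) (cont_f B)
  rw [interior_Ici]
  intro x hx y hy hxy
  rw [deriv_eq_f B x hx, deriv_eq_f B y hy]
  exact strictAnti_f' B (Set.mem_Ici.mpr (le_of_lt (Set.mem_Ioi.mp hx))) (Set.mem_Ici.mpr (le_of_lt (Set.mem_Ioi.mp hy))) hxy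

lemma strict_max (α : ℝ) (hα0 : 0 < α) (hα1 : α ≤ B.f' 0)
    (x : ℝ) (hx : 0 ≤ x) (hne : x ≠ B.xhat α) :
    B.f x - α * x < B.fstar α := by
  by_contra h
  push_neg at h
  have hx' := B.xhat_nonneg α hα0 hα1
  have heq : B.f x - α * x = B.fstar α :=
    le_antisymm (B.xhat_max α hα0 hα1 x hx) h
  have hmid := (strictConcave B).2 (Set.mem_Ici.mpr hx) (Set.mem_Ici.mpr hx') hne
      (by norm_num : (0:ℝ) < 1/2) (by norm_num : (0:ℝ) < 1/2) (by norm_num)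
  simp only [smul_eq_mul] at hmid
  have hm0 : (0:ℝ) ≤ 1/2 * x + 1/2 * B.xhat α := by positivity
  have hmax := B.xhat_max α hα0 hα1 _ hm0
  unfold BenefitFun.fstar at heq
  nlinarith [hmid, hmax, heq]

lemma xhat_pos (α : ℝ) (hα0 : 0 < α) (hα1 : α < B.f' 0) : 0 < B.xhat α := by
  rcases lt_or_eq_of_le (B.xhat_nonneg α hα0 hα1.le) with h | h
  · exact h
  · exfalso
    have := B.xhat_spec α hα0 hα1.le
    rw [← h] at this
    linarith

lemma grad_strict (α β : ℝ) (hα0 : 0 < α) (hα1 : α ≤ B.f' 0)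
    (hβ0 : 0 < β) (hβ1 : β ≤ B.f' 0) (hne : α ≠ β) :
    B.fstar β + (β - α) * B.xhat β < B.fstar α := by
  have hxne : B.xhat β ≠ B.xhat α := by
    intro h
    exact hne (by rw [← B.xhat_spec α hα0 hα1, ← B.xhat_spec β hβ0 hβ1, h])
  have h := strict_max B α hα0 hα1 (B.xhat β) (B.xhat_nonneg β hβ0 hβ1) hxne
  unfold BenefitFun.fstar at h ⊢
  nlinarith [h]

end AuxLemmas

lemma btilde_eq (κ δ σ : ℝ) (k : ℕ) (hk : 1 ≤ k) :
    btilde κ δ σ k = (δ + σ) + (κ - (δ + σ)) / k := by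
  have hk0 : (k:ℝ) ≠ 0 := Nat.cast_ne_zero.mpr (by omega)
  unfold btilde
  field_simp
  ring

theorem stmt3 (B : BenefitFun)
    (κ δ σ : ℝ) (hκ : 0 < κ) (hδ : 0 < δ) (hσ : 0 < σ)
    (hcost : δ + σ < κ) (hκf : κ < B.f' 0) :
    (∀ n : ℕ, 2 ≤ n → MP B κ δ σ (n - 1) < MP B κ δ σ n)
    ∧ (∀ n : ℕ, 2 ≤ n → B.fstar (btilde κ δ σ n) < MP B κ δ σ n) := by
  set c := δ + σ with hc
  have hd : 0 < κ - c := by linarith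
  have hcpos : 0 < c := by positivity
  -- basic facts about btilde for k ≥ 1
  have hmem : ∀ k : ℕ, 1 ≤ k → 0 < btilde κ δ σ k ∧ btilde κ δ σ k ≤ κ := by
    intro k hk
    have hk1 : (1:ℝ) ≤ (k:ℝ) := by exact_mod_cast hk
    have hk0 : (0:ℝ) < (k:ℝ) := by linarith
    rw [btilde_eq κ δ σ k hk]
    constructor
    · have : 0 < (κ - c) / k := by positivity
      linarith
    · have := div_le_self hd.le hk1
      linarith
  have hle : ∀ k : ℕ, 1 ≤ k → btilde κ δ σ k ≤ B.f' 0 := fun k hk =>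
    le_trans (hmem k hk).2 hκf.le
  have hltf0 : ∀ k : ℕ, 1 ≤ k → btilde κ δ σ k < B.f' 0 := fun k hk =>
    lt_of_le_of_lt (hmem k hk).2 hκf
  -- strict monotonicity of btilde
  have hblt : ∀ j k : ℕ, 1 ≤ j → j < k → btilde κ δ σ k < btilde κ δ σ j := by
    intro j k hj hjk
    rw [btilde_eq κ δ σ j hj, btilde_eq κ δ σ k (by omega)]
    have hj0 : (0:ℝ) < (j:ℝ) := by exact_mod_cast Nat.lt_of_lt_of_le Nat.zero_lt_one hj
    have hjk' : (j:ℝ) < (k:ℝ) := by exact_mod_cast hjk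
    have := div_lt_div_of_pos_left hd hj0 hjk'
    linarith
  -- core: for m, with β₁ = btilde(m+1), β₂ = btilde(m+2), x = xhat β₁
  constructor
  · intro n hn
    obtain ⟨m, rfl⟩ : ∃ m, n = m + 2 := ⟨n - 2, by omega⟩
    set β₁ := btilde κ δ σ (m+1) with hb1
    set β₂ := btilde κ δ σ (m+2) with hb2
    set x := B.xhat β₁ with hxdef
    have hβ₁ := hmem (m+1) (by omega)
    have hβ₂ := hmem (m+2) (by omega)
    have hx : 0 < x := xhat_pos B β₁ hβ₁.1 (hltf0 (m+1) (by omega))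
    have h21 : β₂ < β₁ := hblt (m+1) (m+2) (by omega) (by omega)
    have hI : B.fstar β₁ + (β₁ - β₂) * x < B.fstar β₂ :=
      grad_strict B β₂ β₁ hβ₂.1 (hle _ (by omega)) hβ₁.1 (hle _ (by omega)) (ne_of_lt h21)
    simp only [MP, Gfun, Nat.add_sub_cancel]
    rcases Nat.eq_zero_or_pos m with rfl | hm
    · -- n = 2
      norm_num
      have ht : 0 < (β₁ - β₂) * x := by nlinarith
      push_cast
      nlinarith [hI]
    · -- m ≥ 1
      set β₀ := btilde κ δ σ m with hb0
      have hβ₀ := hmem m hm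
      have h10 : β₁ < β₀ := hblt m (m+1) hm (by omega)
      have hII : B.fstar β₁ + (β₁ - β₀) * x ≤ B.fstar β₀ := by
        have h := B.xhat_max β₀ hβ₀.1 (hle m hm) x hx.le
        unfold BenefitFun.fstar at h ⊢
        nlinarith [h]
      -- the key algebraic identity
      have hm0 : (0:ℝ) < (m:ℝ) := by exact_mod_cast hm
      have hkey : ((m:ℝ)+2) * (β₁ - β₂) = (m:ℝ) * (β₀ - β₁) := by
        rw [hb0, hb1, hb2, btilde_eq κ δ σ m hm, btilde_eq κ δ σ (m+1) (by omega),
          btilde_eq κ δ σ (m+2) (by omega)]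
        push_cast
        field_simp
        ring
      have h1 : ((m:ℝ)+2) * (B.fstar β₁ + (β₁ - β₂) * x) < ((m:ℝ)+2) * B.fstar β₂ :=
        (mul_lt_mul_iff_right₀ (by linarith)).mpr hI
      have h2 : (m:ℝ) * (B.fstar β₁ + (β₁ - β₀) * x) ≤ (m:ℝ) * B.fstar β₀ :=
        mul_le_mul_of_nonneg_left hII hm0.le
      push_cast
      nlinarith [h1, h2, hkey]
  · intro n hn
    obtain ⟨m, rfl⟩ : ∃ m, n = m + 2 := ⟨n - 2, by omega⟩
    set β₁ := btilde κ δ σ (m+1) with hb1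
    set β₂ := btilde κ δ σ (m+2) with hb2
    set x := B.xhat β₁ with hxdef
    have hβ₁ := hmem (m+1) (by omega)
    have hβ₂ := hmem (m+2) (by omega)
    have hx : 0 < x := xhat_pos B β₁ hβ₁.1 (hltf0 (m+1) (by omega))
    have h21 : β₂ < β₁ := hblt (m+1) (m+2) (by omega) (by omega)
    have hI : B.fstar β₁ + (β₁ - β₂) * x < B.fstar β₂ :=
      grad_strict B β₂ β₁ hβ₂.1 (hle _ (by omega)) hβ₁.1 (hle _ (by omega)) (ne_of_lt h21)
    simp only [MP, Gfun, Nat.add_sub_cancel]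
    push_cast
    nlinarith [hI, hx, h21, mul_pos (sub_pos.mpr h21) hx]
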